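/- arXiv:1803.07290 — 3 statements merged into one kernel-verified Lean document; each statement's English description precedes it below -/
import Mathlib

section
/- Let a < b, M : [a,b] → ℝ continuous, u : [a,b] → ℝ continuous. Then ∫ₐᵇ (∫ₐ^s (s-η)·u(η) dη) · M(s) · (∫ₐ^s u(ζ) dζ) ds = ∫ₐᵇ ∫ₐᵇ u(s) · K(s,θ) · u(θ) dθ ds, where K(s,θ) = I(s-θ)·∫_s^b (η-s)·M(η) dη + I(θ-s)·∫_θ^b (η-s)·M(η) dη. -/
open MeasureTheory intervalIntegral Set

noncomputable def ind (x : ℝ) : ℝ := if 0 ≤ x then 1 else 0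

lemma ae_ne' (s : ℝ) : ∀ᵐ θ : ℝ, θ ≠ s := by
  refine ae_iff.mpr ?_
  simp [Set.setOf_eq_eq_singleton]

lemma tri_swap (a b : ℝ) (hab : a ≤ b) (f : ℝ → ℝ → ℝ)
    (hf : Continuous (Function.uncurry f)) :
    (∫ s in a..b, ∫ θ in s..b, f s θ) = ∫ θ in a..b, ∫ s in a..θ, f s θ := by
  set g : ℝ → ℝ → ℝ := fun s θ => if s ≤ θ then f s θ else 0 with hgdef
  have hfc : ∀ s, Continuous (f s) := fun s => hf.comp (Continuous.prodMk_right s)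
  have hfc' : ∀ θ, Continuous (fun s => f s θ) := fun θ => hf.comp (Continuous.prodMk_left θ)
  -- step 1
  have h1 : ∀ s ∈ Icc a b, (∫ θ in s..b, f s θ) = ∫ θ in a..b, g s θ := by
    intro s hs
    have i1 : IntervalIntegrable (g s) volume a s := by
      refine (_root_.intervalIntegrable_const (c := (0:ℝ))).congr_ae ?_
      filter_upwards [ae_restrict_mem measurableSet_uIoc,
        ((ae_ne' s).filter_mono (ae_mono Measure.restrict_le_self))] with θ hθ hθs
      rw [Set.uIoc_of_le hs.1] at hθ
      have : ¬ s ≤ θ := fun h => hθs (le_antisymm hθ.2 h)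
      simp [hgdef, this]
    have i2 : IntervalIntegrable (g s) volume s b := by
      refine ((hfc s).intervalIntegrable s b).congr_ae ?_
      filter_upwards [ae_restrict_mem measurableSet_uIoc] with θ hθ
      rw [Set.uIoc_of_le hs.2] at hθ
      simp [hgdef, hθ.1.le]
    rw [← integral_add_adjacent_intervals i1 i2]
    have e1 : (∫ θ in a..s, g s θ) = 0 := by
      rw [show (0:ℝ) = ∫ θ in a..s, (0:ℝ) by simp]
      refine integral_congr_ae ?_
      filter_upwards [ae_ne' s] with θ hθs hθ
      rw [Set.uIoc_of_le hs.1] at hθ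
      have : ¬ s ≤ θ := fun h => hθs (le_antisymm hθ.2 h)
      simp [hgdef, this]
    have e2 : (∫ θ in s..b, g s θ) = ∫ θ in s..b, f s θ := by
      refine integral_congr fun θ hθ => ?_
      rw [Set.uIcc_of_le hs.2] at hθ
      simp [hgdef, hθ.1]
    rw [e1, e2, zero_add]
  -- step 2
  have h2 : ∀ θ ∈ Icc a b, (∫ s in a..θ, f s θ) = ∫ s in a..b, g s θ := by
    intro θ hθ
    have i1 : IntervalIntegrable (fun s => g s θ) volume a θ := by
      refine ((hfc' θ).intervalIntegrable a θ).congr_ae ?_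
      filter_upwards [ae_restrict_mem measurableSet_uIoc] with s hsm
      rw [Set.uIoc_of_le hθ.1] at hsm
      simp [hgdef, hsm.2]
    have i2 : IntervalIntegrable (fun s => g s θ) volume θ b := by
      refine (_root_.intervalIntegrable_const (c := (0:ℝ))).congr_ae ?_
      filter_upwards [ae_restrict_mem measurableSet_uIoc] with s hsm
      rw [Set.uIoc_of_le hθ.2] at hsm
      simp [hgdef, not_le.mpr hsm.1]
    rw [← integral_add_adjacent_intervals i1 i2]
    have e1 : (∫ s in a..θ, g s θ) = ∫ s in a..θ, f s θ := by
      refine integral_congr fun s hsm => ?_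
      rw [Set.uIcc_of_le hθ.1] at hsm
      simp [hgdef, hsm.2]
    have e2 : (∫ s in θ..b, g s θ) = 0 := by
      rw [show (0:ℝ) = ∫ s in θ..b, (0:ℝ) by simp]
      refine integral_congr_ae (Filter.Eventually.of_forall fun s hsm => ?_)
      rw [Set.uIoc_of_le hθ.2] at hsm
      simp [hgdef, not_le.mpr hsm.1]
    rw [e1, e2, add_zero]
  -- Fubini
  set μ := volume.restrict (Set.Ioc a b) with hμ
  haveI : IsFiniteMeasure μ := ⟨by simp [hμ, Real.volume_Ioc]⟩
  have hint : Integrable (Function.uncurry g) (μ.prod μ) := by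
    have hS : MeasurableSet {p : ℝ × ℝ | p.1 ≤ p.2} := measurableSet_le measurable_fst measurable_snd
    have hgm : StronglyMeasurable (Function.uncurry g) := by
      have : Function.uncurry g = {p : ℝ × ℝ | p.1 ≤ p.2}.indicator (Function.uncurry f) := by
        funext p; by_cases h : p.1 ≤ p.2 <;> simp [Function.uncurry, hgdef, h, Set.indicator_apply]
      rw [this]
      exact hf.stronglyMeasurable.indicator hS
    obtain ⟨C, hC⟩ := (isCompact_Icc.prod isCompact_Icc).exists_bound_of_continuousOn
      (s := Set.Icc a b ×ˢ Set.Icc a b) hf.continuousOn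
    have hC0 : 0 ≤ C := le_trans (norm_nonneg _)
      (hC (a, a) ⟨⟨le_refl a, hab⟩, ⟨le_refl a, hab⟩⟩)
    refine ⟨hgm.aestronglyMeasurable, HasFiniteIntegral.of_bounded (C := C) ?_⟩
    have hprod : μ.prod μ = (volume.prod volume).restrict (Set.Ioc a b ×ˢ Set.Ioc a b) := by
      rw [hμ, Measure.prod_restrict]
    rw [hprod]
    filter_upwards [ae_restrict_mem (measurableSet_Ioc.prod measurableSet_Ioc)] with p hp
    by_cases h : p.1 ≤ p.2
    · simpa [Function.uncurry, hgdef, h] using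
        hC p ⟨Set.Ioc_subset_Icc_self hp.1, Set.Ioc_subset_Icc_self hp.2⟩
    · simp [Function.uncurry, hgdef, h, hC0]
  calc (∫ s in a..b, ∫ θ in s..b, f s θ)
      = ∫ s in a..b, ∫ θ in a..b, g s θ :=
        integral_congr fun s hs => h1 s (by rwa [Set.uIcc_of_le hab] at hs)
    _ = ∫ s, ∫ θ, g s θ ∂μ ∂μ := by
        rw [integral_of_le hab]; exact setIntegral_congr_fun measurableSet_Ioc
          fun s _ => integral_of_le hab
    _ = ∫ θ, ∫ s, g s θ ∂μ ∂μ := integral_integral_swap hint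
    _ = ∫ θ in a..b, ∫ s in a..b, g s θ := by
        rw [integral_of_le hab]; exact setIntegral_congr_fun measurableSet_Ioc
          fun θ _ => (integral_of_le hab).symm
    _ = ∫ θ in a..b, ∫ s in a..θ, f s θ :=
        (integral_congr fun θ hθ => (h2 θ (by rwa [Set.uIcc_of_le hab] at hθ))).symm

lemma key (a b : ℝ) (hab : a < b) (M u : ℝ → ℝ) (hM : Continuous M) (hu : Continuous u) :
    ∫ s in a..b, (∫ η in a..s, (s - η) * u η) * M s * (∫ ζ in a..s, u ζ)
      = ∫ s in a..b, ∫ θ in a..b,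
          u s * (ind (s - θ) * (∫ η in s..b, (η - s) * M η)
                 + ind (θ - s) * (∫ η in θ..b, (η - s) * M η)) * u θ := by
  set x4 : ℝ → ℝ := fun s => ∫ t in a..s, u t with hx4def
  set xA : ℝ → ℝ := fun s => ∫ t in a..s, t * u t with hxAdef
  set GA : ℝ → ℝ := fun s => ∫ t in s..b, t * M t with hGAdef
  set h2 : ℝ → ℝ := fun s => ∫ t in s..b, M t with hh2def
  -- derivative facts
  have hx4 : ∀ s, HasDerivAt x4 (u s) s := fun s =>
    integral_hasDerivAt_right (hu.intervalIntegrable _ _)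
      (hu.stronglyMeasurable.stronglyMeasurableAtFilter) hu.continuousAt
  have hxA : ∀ s, HasDerivAt xA (s * u s) s := fun s =>
    integral_hasDerivAt_right ((continuous_id'.mul hu).intervalIntegrable _ _)
      ((continuous_id'.mul hu).stronglyMeasurable.stronglyMeasurableAtFilter)
      (continuous_id'.mul hu).continuousAt
  have hGA : ∀ s, HasDerivAt GA (-(s * M s)) s := fun s =>
    integral_hasDerivAt_left ((continuous_id'.mul hM).intervalIntegrable _ _)
      ((continuous_id'.mul hM).stronglyMeasurable.stronglyMeasurableAtFilter)
      (continuous_id'.mul hM).continuousAt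
  have hh2 : ∀ s, HasDerivAt h2 (-M s) s := fun s =>
    integral_hasDerivAt_left (hM.intervalIntegrable _ _)
      (hM.stronglyMeasurable.stronglyMeasurableAtFilter) hM.continuousAt
  have hx4c : Continuous x4 := continuous_iff_continuousAt.mpr fun s => (hx4 s).continuousAt
  have hxAc : Continuous xA := continuous_iff_continuousAt.mpr fun s => (hxA s).continuousAt
  have hGAc : Continuous GA := continuous_iff_continuousAt.mpr fun s => (hGA s).continuousAt
  have hh2c : Continuous h2 := continuous_iff_continuousAt.mpr fun s => (hh2 s).continuousAt
  set x2 : ℝ → ℝ := fun s => s * x4 s - xA s with hx2def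
  set G : ℝ → ℝ := fun s => GA s - s * h2 s with hGdef
  have hx2c : Continuous x2 := (continuous_id'.mul hx4c).sub hxAc
  have hGc : Continuous G := hGAc.sub (continuous_id'.mul hh2c)
  have hx2 : ∀ s, HasDerivAt x2 (x4 s) s := by
    intro s
    have h := ((hasDerivAt_id' (x := s)).mul (hx4 s)).sub (hxA s)
    exact h.congr_deriv (by ring)
  have hG : ∀ s, HasDerivAt G (-h2 s) s := by
    intro s
    have h := (hGA s).sub ((hasDerivAt_id' (x := s)).mul (hh2 s))
    exact h.congr_deriv (by ring)
  -- pointwise identities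
  have hx2eq : ∀ s : ℝ, (∫ η in a..s, (s - η) * u η) = x2 s := by
    intro s
    rw [hx2def]
    have : ∀ η, (s - η) * u η = s * u η - η * u η := fun η => by ring
    simp only [this]
    rw [integral_sub (f := fun η => s * u η) (g := fun η => η * u η)
      ((continuous_const.mul hu).intervalIntegrable _ _)
      ((continuous_id'.mul hu).intervalIntegrable _ _), intervalIntegral.integral_const_mul]
  have hWeq : ∀ s θ : ℝ, (∫ η in θ..b, (η - s) * M η) = GA θ - s * h2 θ := by
    intro s θ
    have : ∀ η, (η - s) * M η = η * M η - s * M η := fun η => by ring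
    simp only [this]
    rw [integral_sub (f := fun η => η * M η) (g := fun η => s * M η)
      ((continuous_id'.mul hM).intervalIntegrable _ _)
      ((continuous_const.mul hM).intervalIntegrable _ _), intervalIntegral.integral_const_mul]
  have hGeq : ∀ s : ℝ, (∫ η in s..b, (η - s) * M η) = G s := fun s => hWeq s s
  -- boundary values
  have hx4a : x4 a = 0 := integral_same
  have hxAa : xA a = 0 := integral_same
  have hx2a : x2 a = 0 := by simp [hx2def, hx4a, hxAa]
  have hh2b : h2 b = 0 := integral_same
  have hGAb : GA b = 0 := integral_same
  have hGb : G b = 0 := by simp [hGdef, hGAb, hh2b]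
  -- LHS via parts
  have lhs1 : (∫ s in a..b, (∫ η in a..s, (s - η) * u η) * M s * (∫ ζ in a..s, u ζ))
      = ∫ s in a..b, (x2 s * x4 s) * M s :=
    integral_congr fun s _ => by rw [hx2eq s]; ring
  have parts1 : (∫ s in a..b, (x2 s * x4 s) * M s)
      = ∫ s in a..b, (x4 s * x4 s + x2 s * u s) * h2 s := by
    have h := integral_mul_deriv_eq_deriv_mul
      (u := fun s => x2 s * x4 s) (u' := fun s => x4 s * x4 s + x2 s * u s)
      (v := fun s => -h2 s) (v' := M) (a := a) (b := b)
      (fun x _ => (hx2 x).mul (hx4 x))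
      (fun x _ => (hh2 x).neg.congr_deriv (neg_neg _))
      (((hx4c.mul hx4c).add (hx2c.mul hu)).intervalIntegrable _ _)
      (hM.intervalIntegrable _ _)
    have e : (∫ x in a..b, (x4 x * x4 x + x2 x * u x) * -h2 x)
        = -∫ x in a..b, (x4 x * x4 x + x2 x * u x) * h2 x := by
      rw [← intervalIntegral.integral_neg]; exact integral_congr fun x _ => by ring
    simp only [hh2b, hx2a, mul_zero, zero_mul, neg_zero, sub_zero, zero_sub] at h
    rw [e] at h
    linarith [h]
  have parts2 : (∫ s in a..b, (x4 s * x4 s) * h2 s)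
      = ∫ s in a..b, (u s * x4 s + x4 s * u s) * G s := by
    have h := integral_mul_deriv_eq_deriv_mul
      (u := fun s => x4 s * x4 s) (u' := fun s => u s * x4 s + x4 s * u s)
      (v := G) (v' := fun s => -h2 s) (a := a) (b := b)
      (fun x _ => (hx4 x).mul (hx4 x))
      (fun x _ => hG x)
      (((hu.mul hx4c).add (hx4c.mul hu)).intervalIntegrable _ _)
      (hh2c.neg.intervalIntegrable _ _)
    have e : (∫ x in a..b, (x4 x * x4 x) * -h2 x)
        = -∫ x in a..b, (x4 x * x4 x) * h2 x := by
      rw [← intervalIntegral.integral_neg]; exact integral_congr fun x _ => by ring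
    simp only [hGb, hx4a, mul_zero, zero_mul, neg_zero, sub_zero, zero_sub] at h
    rw [e] at h
    linarith [h]
  -- P and Q
  set P : ℝ → ℝ := fun s => ∫ θ in s..b, GA θ * u θ with hPdef
  set Q : ℝ → ℝ := fun s => ∫ θ in s..b, h2 θ * u θ with hQdef
  have hP : ∀ s, HasDerivAt P (-(GA s * u s)) s := fun s =>
    integral_hasDerivAt_left ((hGAc.mul hu).intervalIntegrable _ _)
      ((hGAc.mul hu).stronglyMeasurable.stronglyMeasurableAtFilter) (hGAc.mul hu).continuousAt
  have hQ : ∀ s, HasDerivAt Q (-(h2 s * u s)) s := fun s =>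
    integral_hasDerivAt_left ((hh2c.mul hu).intervalIntegrable _ _)
      ((hh2c.mul hu).stronglyMeasurable.stronglyMeasurableAtFilter) (hh2c.mul hu).continuousAt
  have hPc : Continuous P := continuous_iff_continuousAt.mpr fun s => (hP s).continuousAt
  have hQc : Continuous Q := continuous_iff_continuousAt.mpr fun s => (hQ s).continuousAt
  have hPQ : ∀ s : ℝ, (∫ θ in s..b, u s * (GA θ - s * h2 θ) * u θ) = u s * (P s - s * Q s) := by
    intro s
    have e : ∀ θ : ℝ, u s * (GA θ - s * h2 θ) * u θ
        = u s * (GA θ * u θ) - u s * s * (h2 θ * u θ) := fun θ => by ring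
    rw [integral_congr fun θ _ => e θ,
      integral_sub (f := fun θ => u s * (GA θ * u θ)) (g := fun θ => u s * s * (h2 θ * u θ))
        ((continuous_const.mul (hGAc.mul hu)).intervalIntegrable _ _)
        ((continuous_const.mul (hh2c.mul hu)).intervalIntegrable _ _),
      intervalIntegral.integral_const_mul, intervalIntegral.integral_const_mul]
    ring
  -- inner integral computation
  have inner_eq : ∀ s ∈ Icc a b,
      (∫ θ in a..b, u s * (ind (s - θ) * (∫ η in s..b, (η - s) * M η)
          + ind (θ - s) * (∫ η in θ..b, (η - s) * M η)) * u θ)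
        = u s * G s * x4 s + u s * (P s - s * Q s) := by
    intro s hs
    have e0 : ∀ θ : ℝ, u s * (ind (s - θ) * (∫ η in s..b, (η - s) * M η)
          + ind (θ - s) * (∫ η in θ..b, (η - s) * M η)) * u θ
        = u s * (ind (s - θ) * G s + ind (θ - s) * (GA θ - s * h2 θ)) * u θ := fun θ => by
      rw [hGeq, hWeq]
    rw [integral_congr fun θ _ => e0 θ]
    set Ffull : ℝ → ℝ := fun θ =>
      u s * (ind (s - θ) * G s + ind (θ - s) * (GA θ - s * h2 θ)) * u θ with hFdef
    have hF1c : Continuous fun θ : ℝ => u s * G s * u θ := continuous_const.mul hu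
    have hF2c : Continuous fun θ : ℝ => u s * (GA θ - s * h2 θ) * u θ :=
      (continuous_const.mul (hGAc.sub (continuous_const.mul hh2c))).mul hu
    have heq1 : ∀ θ : ℝ, θ < s → Ffull θ = u s * G s * u θ := by
      intro θ hθ
      have h1 : ind (s - θ) = 1 := if_pos (by linarith)
      have h2' : ind (θ - s) = 0 := if_neg (by simp; linarith)
      simp [hFdef, h1, h2']
    have heq2 : ∀ θ : ℝ, s < θ → Ffull θ = u s * (GA θ - s * h2 θ) * u θ := by
      intro θ hθ
      have h1 : ind (s - θ) = 0 := if_neg (by simp; linarith)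
      have h2' : ind (θ - s) = 1 := if_pos (by linarith)
      simp [hFdef, h1, h2']
    have i1 : IntervalIntegrable Ffull volume a s := by
      refine (hF1c.intervalIntegrable a s).congr_ae ?_
      filter_upwards [ae_restrict_mem measurableSet_uIoc,
        ((ae_ne' s).filter_mono (ae_mono Measure.restrict_le_self))] with θ hθ hθs
      rw [Set.uIoc_of_le hs.1] at hθ
      exact (heq1 θ (lt_of_le_of_ne hθ.2 hθs)).symm
    have i2 : IntervalIntegrable Ffull volume s b := by
      refine (hF2c.intervalIntegrable s b).congr_ae ?_
      filter_upwards [ae_restrict_mem measurableSet_uIoc] with θ hθ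
      rw [Set.uIoc_of_le hs.2] at hθ
      exact (heq2 θ hθ.1).symm
    rw [← integral_add_adjacent_intervals i1 i2]
    have e1 : (∫ θ in a..s, Ffull θ) = u s * G s * x4 s := by
      have : (∫ θ in a..s, Ffull θ) = ∫ θ in a..s, u s * G s * u θ := by
        refine integral_congr_ae ?_
        filter_upwards [ae_ne' s] with θ hθs hθ
        rw [Set.uIoc_of_le hs.1] at hθ
        exact heq1 θ (lt_of_le_of_ne hθ.2 hθs)
      rw [this, intervalIntegral.integral_const_mul]
    have e2 : (∫ θ in s..b, Ffull θ) = u s * (P s - s * Q s) := by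
      have : (∫ θ in s..b, Ffull θ) = ∫ θ in s..b, u s * (GA θ - s * h2 θ) * u θ := by
        refine integral_congr_ae (Filter.Eventually.of_forall fun θ hθ => ?_)
        rw [Set.uIoc_of_le hs.2] at hθ
        exact heq2 θ hθ.1
      rw [this, hPQ]
    rw [e1, e2]
  -- assemble LHS
  have hL : (∫ s in a..b, (∫ η in a..s, (s - η) * u η) * M s * (∫ ζ in a..s, u ζ))
      = ∫ s in a..b, ((u s * x4 s + x4 s * u s) * G s + x2 s * u s * h2 s) := by
    rw [lhs1, parts1]
    have split : (∫ s in a..b, (x4 s * x4 s + x2 s * u s) * h2 s)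
        = (∫ s in a..b, (x4 s * x4 s) * h2 s) + ∫ s in a..b, x2 s * u s * h2 s := by
      rw [← integral_add (f := fun s => (x4 s * x4 s) * h2 s) (g := fun s => x2 s * u s * h2 s)
        (((hx4c.mul hx4c).mul hh2c).intervalIntegrable _ _)
        (((hx2c.mul hu).mul hh2c).intervalIntegrable _ _)]
      exact integral_congr fun s _ => by ring
    rw [split, parts2,
      ← integral_add (f := fun s => (u s * x4 s + x4 s * u s) * G s)
        (g := fun s => x2 s * u s * h2 s)
        ((((hu.mul hx4c).add (hx4c.mul hu)).mul hGc).intervalIntegrable _ _)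
        (((hx2c.mul hu).mul hh2c).intervalIntegrable _ _)]
  -- assemble RHS
  have htri := tri_swap a b hab.le (fun s θ => u s * (GA θ - s * h2 θ) * u θ)
    (by fun_prop)
  have hinner2 : ∀ θ : ℝ, (∫ s in a..θ, u s * (GA θ - s * h2 θ) * u θ)
      = GA θ * u θ * x4 θ - h2 θ * u θ * xA θ := by
    intro θ
    have e : ∀ s : ℝ, u s * (GA θ - s * h2 θ) * u θ
        = GA θ * u θ * u s - h2 θ * u θ * (s * u s) := fun s => by ring
    rw [integral_congr fun s _ => e s,
      integral_sub (f := fun s => GA θ * u θ * u s) (g := fun s => h2 θ * u θ * (s * u s))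
        ((continuous_const.mul hu).intervalIntegrable _ _)
        ((continuous_const.mul (continuous_id'.mul hu)).intervalIntegrable _ _),
      intervalIntegral.integral_const_mul, intervalIntegral.integral_const_mul]
  have hR : (∫ s in a..b, ∫ θ in a..b,
        u s * (ind (s - θ) * (∫ η in s..b, (η - s) * M η)
          + ind (θ - s) * (∫ η in θ..b, (η - s) * M η)) * u θ)
      = ∫ s in a..b, (u s * G s * x4 s + (GA s * u s * x4 s - h2 s * u s * xA s)) := by
    rw [integral_congr fun s hs => inner_eq s (by rwa [Set.uIcc_of_le hab.le] at hs)]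
    rw [integral_add (f := fun s => u s * G s * x4 s) (g := fun s => u s * (P s - s * Q s))
      (((hu.mul hGc).mul hx4c).intervalIntegrable _ _)
      ((hu.mul (hPc.sub (continuous_id'.mul hQc))).intervalIntegrable _ _)]
    rw [integral_congr (g := fun s => ∫ θ in s..b, u s * (GA θ - s * h2 θ) * u θ)
      (fun s _ => (hPQ s).symm), htri]
    rw [integral_congr fun θ _ => hinner2 θ]
    rw [← integral_add (f := fun s => u s * G s * x4 s)
      (g := fun s => GA s * u s * x4 s - h2 s * u s * xA s)
      (((hu.mul hGc).mul hx4c).intervalIntegrable _ _)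
      (((hGAc.mul hu).mul hx4c).sub ((hh2c.mul hu).mul hxAc) |>.intervalIntegrable _ _)]
  rw [hL, hR]
  exact integral_congr fun s _ => by simp only [hx2def, hGdef]; ring

theorem stmt8 (a b : ℝ) (hab : a < b) (M u : ℝ → ℝ)
    (hM : ContinuousOn M (Set.Icc a b)) (hu : ContinuousOn u (Set.Icc a b)) :
    ∫ s in a..b, (∫ η in a..s, (s - η) * u η) * M s * (∫ ζ in a..s, u ζ)
      = ∫ s in a..b, ∫ θ in a..b,
          u s * (ind (s - θ) * (∫ η in s..b, (η - s) * M η)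
                 + ind (θ - s) * (∫ η in θ..b, (η - s) * M η)) * u θ := by
  have hle := hab.le
  set U : ℝ → ℝ := Set.IccExtend hle (fun x : Set.Icc a b => u x) with hUdef
  set Mc : ℝ → ℝ := Set.IccExtend hle (fun x : Set.Icc a b => M x) with hMcdef
  have hUc : Continuous U := Continuous.Icc_extend' hu.restrict
  have hMcc : Continuous Mc := Continuous.Icc_extend' hM.restrict
  have hUeq : ∀ x ∈ Set.Icc a b, U x = u x := fun x hx => by
    rw [hUdef, Set.IccExtend_of_mem hle _ hx]
  have hMeq : ∀ x ∈ Set.Icc a b, Mc x = M x := fun x hx => by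
    rw [hMcdef, Set.IccExtend_of_mem hle _ hx]
  have hsub1 : ∀ s ∈ Set.Icc a b, Set.uIcc a s ⊆ Set.Icc a b := fun s hs => by
    rw [Set.uIcc_of_le hs.1]; exact Set.Icc_subset_Icc le_rfl hs.2
  have hsub2 : ∀ s ∈ Set.Icc a b, Set.uIcc s b ⊆ Set.Icc a b := fun s hs => by
    rw [Set.uIcc_of_le hs.2]; exact Set.Icc_subset_Icc hs.1 le_rfl
  have hk := key a b hab Mc U hMcc hUc
  have eL : (∫ s in a..b, (∫ η in a..s, (s - η) * u η) * M s * (∫ ζ in a..s, u ζ))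
      = ∫ s in a..b, (∫ η in a..s, (s - η) * U η) * Mc s * (∫ ζ in a..s, U ζ) := by
    refine integral_congr fun s hs => ?_
    rw [Set.uIcc_of_le hle] at hs
    have e1 : (∫ η in a..s, (s - η) * u η) = ∫ η in a..s, (s - η) * U η :=
      integral_congr fun η hη => by rw [hUeq η (hsub1 s hs hη)]
    have e2 : (∫ ζ in a..s, u ζ) = ∫ ζ in a..s, U ζ :=
      integral_congr fun ζ hζ => by rw [hUeq ζ (hsub1 s hs hζ)]
    rw [e1, e2, hMeq s hs]
  have eR : (∫ s in a..b, ∫ θ in a..b,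
        u s * (ind (s - θ) * (∫ η in s..b, (η - s) * M η)
          + ind (θ - s) * (∫ η in θ..b, (η - s) * M η)) * u θ)
      = ∫ s in a..b, ∫ θ in a..b,
          U s * (ind (s - θ) * (∫ η in s..b, (η - s) * Mc η)
            + ind (θ - s) * (∫ η in θ..b, (η - s) * Mc η)) * U θ := by
    refine integral_congr fun s hs => ?_
    rw [Set.uIcc_of_le hle] at hs
    refine integral_congr fun θ hθ => ?_
    rw [Set.uIcc_of_le hle] at hθ
    have e1 : (∫ η in s..b, (η - s) * M η) = ∫ η in s..b, (η - s) * Mc η :=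
      integral_congr fun η hη => by rw [hMeq η (hsub2 s hs hη)]
    have e2 : (∫ η in θ..b, (η - s) * M η) = ∫ η in θ..b, (η - s) * Mc η :=
      integral_congr fun η hη => by rw [hMeq η (hsub2 θ hθ hη)]
    rw [e1, e2, hUeq s hs, hUeq θ hθ]
  exact eL.trans (hk.trans eR.symm)
end

section
/- Let a < b, N : [a,b]×[a,b] → ℝ continuous, u : [a,b] → ℝ continuous. Then ∫ₐᵇ ∫_s^b (∫ₐ^s (s-η)·u(η) dη) · N(s,θ) · (∫ₐ^θ u(ζ) dζ) dθ ds = ∫ₐᵇ ∫ₐᵇ u(s) · K(s,θ) · u(θ) dθ ds, where K(s,θ) = I(s-θ)·∫_s^b ∫_s^ζ (η-s)·N(η,ζ) dη dζ + I(θ-s)·∫_θ^b ∫_s^ζ (η-s)·N(η,ζ) dη dζ. -/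
open MeasureTheory intervalIntegral Set

lemma tri_swap_s10 {a b : ℝ} (hab : a ≤ b) {f : ℝ → ℝ → ℝ}
    (hf : Continuous fun p : ℝ × ℝ => f p.1 p.2) :
    ∫ x in a..b, ∫ y in x..b, f x y = ∫ y in a..b, ∫ x in a..y, f x y := by
  set F : ℝ × ℝ → ℝ := fun p => f p.1 p.2 with hF
  set G : ℝ × ℝ → ℝ := {p : ℝ × ℝ | p.1 < p.2}.indicator F with hG
  have hmeas : MeasurableSet {p : ℝ × ℝ | p.1 < p.2} :=
    measurableSet_lt measurable_fst measurable_snd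
  have hGi : Integrable (fun z : ℝ × ℝ => G z)
      ((volume.restrict (Ioc a b)).prod (volume.restrict (Ioc a b))) := by
    rw [Measure.prod_restrict]
    refine Integrable.indicator ?_ hmeas
    exact (hf.continuousOn.integrableOn_compact (isCompact_Icc.prod isCompact_Icc)).mono_set
      (Set.prod_mono Ioc_subset_Icc_self Ioc_subset_Icc_self)
  have key := integral_integral_swap (f := fun x y => G (x, y)) hGi
  have hL : (∫ x in a..b, ∫ y in x..b, f x y)
      = ∫ x in Ioc a b, ∫ y in Ioc a b, G (x, y) := by
    rw [integral_of_le hab]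
    refine setIntegral_congr_fun measurableSet_Ioc (fun x hx => ?_)
    rw [integral_of_le hx.2]
    have : ∫ y in Ioc a b, G (x, y) = ∫ y in Ioc a b, (Ioc x b).indicator (f x) y := by
      refine setIntegral_congr_fun measurableSet_Ioc (fun y hy => ?_)
      simp only [hG, hF, indicator, mem_setOf_eq, mem_Ioc]
      by_cases h : x < y
      · simp [h, hy.2]
      · simp [h]
    rw [this, setIntegral_indicator measurableSet_Ioc,
      Ioc_inter_Ioc, max_eq_right hx.1.le, min_self]
  have hR : (∫ y in a..b, ∫ x in a..y, f x y)
      = ∫ y in Ioc a b, ∫ x in Ioc a b, G (x, y) := by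
    rw [integral_of_le hab]
    refine setIntegral_congr_fun measurableSet_Ioc (fun y hy => ?_)
    rw [integral_of_le hy.1.le]
    have : ∫ x in Ioc a b, G (x, y) = ∫ x in Ioc a b, (Iio y).indicator (fun x => f x y) x := by
      refine setIntegral_congr_fun measurableSet_Ioc (fun x hx => ?_)
      simp only [hG, hF, indicator, mem_setOf_eq, mem_Iio]
    rw [this, setIntegral_indicator measurableSet_Iio]
    have : Ioc a b ∩ Iio y = Ioo a y := by
      ext t; simp only [mem_inter_iff, mem_Ioc, mem_Iio, mem_Ioo]
      exact ⟨fun h => ⟨h.1.1, h.2⟩, fun h => ⟨⟨h.1, h.2.le.trans hy.2⟩, h.2⟩⟩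
    rw [this, integral_Ioc_eq_integral_Ioo]
  rw [hL, hR, key]

set_option maxHeartbeats 1000000 in
lemma cont_param_int {X : Type*} [TopologicalSpace X] {f : X → ℝ → ℝ}
    (hf : Continuous fun q : X × ℝ => f q.1 q.2) {l r : X → ℝ}
    (hl : Continuous l) (hr : Continuous r) :
    Continuous fun x => ∫ t in l x..r x, f x t := by
  have h1 : Continuous fun q : X × ℝ => ∫ t in (0:ℝ)..q.2, f q.1 t :=
    intervalIntegral.continuous_parametric_primitive_of_continuous (f := f) (μ := volume)
      (a₀ := 0) hf
  have hA : Continuous fun x => ∫ t in (0:ℝ)..r x, f x t := h1.comp₂ continuous_id hr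
  have hB : Continuous fun x => ∫ t in (0:ℝ)..l x, f x t := h1.comp₂ continuous_id hl
  have heq : ∀ x, (∫ t in l x..r x, f x t)
      = (∫ t in (0:ℝ)..r x, f x t) - ∫ t in (0:ℝ)..l x, f x t := by
    intro x
    have hint : ∀ c d : ℝ, IntervalIntegrable (f x) volume c d :=
      fun c d => ((hf.comp (Continuous.prodMk_right x)).intervalIntegrable c d)
    rw [intervalIntegral.integral_interval_sub_left (hint 0 (r x)) (hint 0 (l x))]
  simp only [heq]
  exact hA.sub hB

lemma cont_int_lb {b : ℝ} {g : ℝ → ℝ → ℝ} (hg : Continuous fun p : ℝ × ℝ => g p.1 p.2) :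
    Continuous fun p : ℝ × ℝ => ∫ t in p.2..b, g p.1 t :=
  cont_param_int (f := fun (p : ℝ × ℝ) t => g p.1 t)
    (hg.comp (continuous_fst.fst.prodMk continuous_snd)) continuous_snd continuous_const

lemma cont_int_diag {b : ℝ} {g : ℝ → ℝ → ℝ} (hg : Continuous fun p : ℝ × ℝ => g p.1 p.2) :
    Continuous fun s : ℝ => ∫ t in s..b, g s t :=
  cont_param_int (f := g) hg continuous_id continuous_const

noncomputable def Bi (a : ℝ) (u : ℝ → ℝ) (t : ℝ) : ℝ := ∫ ζ in a..t, u ζ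
noncomputable def Mi (N : ℝ → ℝ → ℝ) (s θ : ℝ) : ℝ := ∫ t in s..θ, (t - s) * N t θ
noncomputable def Ki (b : ℝ) (N : ℝ → ℝ → ℝ) (s θ : ℝ) : ℝ := ∫ ζ in θ..b, Mi N s ζ

set_option maxHeartbeats 1000000 in
lemma core (a b : ℝ) (hab : a ≤ b) (N : ℝ → ℝ → ℝ) (u : ℝ → ℝ)
    (hN : Continuous fun p : ℝ × ℝ => N p.1 p.2) (hu : Continuous u) :
    ∫ s in a..b, ∫ θ in s..b, (∫ η in a..s, (s - η) * u η) * N s θ * (∫ ζ in a..θ, u ζ)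
      = ∫ s in a..b, ∫ θ in a..b,
          u s * (ind (s - θ) * (∫ ζ in s..b, ∫ η in s..ζ, (η - s) * N η ζ)
                 + ind (θ - s) * (∫ ζ in θ..b, ∫ η in s..ζ, (η - s) * N η ζ)) * u θ := by
  have hB : Continuous (Bi a u) := by
    unfold Bi
    exact intervalIntegral.continuous_primitive (fun c d => hu.intervalIntegrable c d) a
  have hM2 : Continuous fun p : ℝ × ℝ => Mi N p.1 p.2 := by
    unfold Mi
    exact cont_param_int (f := fun (p : ℝ × ℝ) t => (t - p.1) * N t p.2)
      ((continuous_snd.sub continuous_fst.fst).mul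
        (hN.comp (continuous_snd.prodMk continuous_fst.snd)))
      continuous_fst continuous_snd
  have hK2 : Continuous fun p : ℝ × ℝ => Ki b N p.1 p.2 := by
    unfold Ki
    exact cont_int_lb (g := Mi N) hM2
  set Φ : ℝ → ℝ := fun s => ∫ θ in s..b, N s θ * Bi a u θ with hΦdef
  have hΦ : Continuous Φ := by
    rw [hΦdef]
    exact cont_int_diag (g := fun s θ => N s θ * Bi a u θ) (hN.mul (hB.comp continuous_snd))
  show (∫ s in a..b, ∫ θ in s..b, (∫ η in a..s, (s - η) * u η) * N s θ * Bi a u θ)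
      = ∫ s in a..b, ∫ θ in a..b,
          u s * (ind (s - θ) * Ki b N s s + ind (θ - s) * Ki b N s θ) * u θ
  have hLHS : (∫ s in a..b, ∫ θ in s..b, (∫ η in a..s, (s - η) * u η) * N s θ * Bi a u θ)
      = ∫ η in a..b, (u η * Bi a u η * Ki b N η η + ∫ ζ in η..b, u η * u ζ * Ki b N η ζ) := by
    calc (∫ s in a..b, ∫ θ in s..b, (∫ η in a..s, (s - η) * u η) * N s θ * Bi a u θ)
        = ∫ s in a..b, ∫ η in a..s, (s - η) * u η * Φ s := by
          refine intervalIntegral.integral_congr fun s _ => ?_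
          rw [show (fun θ => (∫ η in a..s, (s - η) * u η) * N s θ * Bi a u θ)
              = fun θ => (∫ η in a..s, (s - η) * u η) * (N s θ * Bi a u θ) from
            funext fun θ => mul_assoc _ _ _, intervalIntegral.integral_const_mul,
            ← intervalIntegral.integral_mul_const]
      _ = ∫ η in a..b, ∫ s in η..b, (s - η) * u η * Φ s :=
          (tri_swap_s10 hab (f := fun x y => (y - x) * u x * Φ y) (by fun_prop)).symm
      _ = ∫ η in a..b, ∫ θ in η..b, u η * Bi a u θ * Mi N η θ := by
          refine intervalIntegral.integral_congr fun η hη => ?_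
          rw [Set.uIcc_of_le hab] at hη
          calc (∫ s in η..b, (s - η) * u η * Φ s)
              = ∫ s in η..b, ∫ θ in s..b, (s - η) * u η * (N s θ * Bi a u θ) := by
                refine intervalIntegral.integral_congr fun s _ => ?_
                rw [intervalIntegral.integral_const_mul]
            _ = ∫ θ in η..b, ∫ s in η..θ, (s - η) * u η * (N s θ * Bi a u θ) :=
                tri_swap_s10 hη.2 (f := fun x y => (x - η) * u η * (N x y * Bi a u y)) (by fun_prop)
            _ = ∫ θ in η..b, u η * Bi a u θ * Mi N η θ := by
                refine intervalIntegral.integral_congr fun θ _ => ?_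
                rw [show (fun s => (s - η) * u η * (N s θ * Bi a u θ))
                    = fun s => (u η * Bi a u θ) * ((s - η) * N s θ) from
                  funext fun s => by ring, intervalIntegral.integral_const_mul]
                rfl
      _ = ∫ η in a..b, (u η * Bi a u η * Ki b N η η + ∫ ζ in η..b, u η * u ζ * Ki b N η ζ) := by
          refine intervalIntegral.integral_congr fun η hη => ?_
          rw [Set.uIcc_of_le hab] at hη
          calc (∫ θ in η..b, u η * Bi a u θ * Mi N η θ)
              = ∫ θ in η..b, (u η * Bi a u η * Mi N η θ
                  + u η * (∫ ζ in η..θ, u ζ) * Mi N η θ) := by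
                refine intervalIntegral.integral_congr fun θ _ => ?_
                have hBsplit : Bi a u θ = Bi a u η + ∫ ζ in η..θ, u ζ := by
                  unfold Bi
                  exact (intervalIntegral.integral_add_adjacent_intervals
                    (hu.intervalIntegrable a η) (hu.intervalIntegrable η θ)).symm
                rw [hBsplit]; ring
            _ = (∫ θ in η..b, u η * Bi a u η * Mi N η θ)
                  + ∫ θ in η..b, u η * (∫ ζ in η..θ, u ζ) * Mi N η θ := by
                refine intervalIntegral.integral_add ?_ ?_ <;>
                  · apply Continuous.intervalIntegrable
                    fun_prop
            _ = u η * Bi a u η * Ki b N η η + ∫ ζ in η..b, u η * u ζ * Ki b N η ζ := by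
                congr 1
                · rw [intervalIntegral.integral_const_mul]; rfl
                · calc (∫ θ in η..b, u η * (∫ ζ in η..θ, u ζ) * Mi N η θ)
                      = ∫ θ in η..b, ∫ ζ in η..θ, u η * u ζ * Mi N η θ := by
                        refine intervalIntegral.integral_congr fun θ _ => ?_
                        rw [show (fun ζ => u η * u ζ * Mi N η θ)
                            = fun ζ => u ζ * (u η * Mi N η θ) from funext fun ζ => by ring,
                          intervalIntegral.integral_mul_const]
                        ring
                    _ = ∫ ζ in η..b, ∫ θ in ζ..b, u η * u ζ * Mi N η θ :=
                        (tri_swap_s10 hη.2 (f := fun x y => u η * u x * Mi N η y) (by fun_prop)).symm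
                    _ = ∫ ζ in η..b, u η * u ζ * Ki b N η ζ := by
                        refine intervalIntegral.integral_congr fun ζ _ => ?_
                        rw [intervalIntegral.integral_const_mul]; rfl
  rw [hLHS]
  refine (intervalIntegral.integral_congr fun s hs => ?_).symm
  rw [Set.uIcc_of_le hab] at hs
  have hane : ∀ᵐ θ : ℝ, θ ≠ s := by
    rw [MeasureTheory.ae_iff]
    have : {θ : ℝ | ¬θ ≠ s} = {s} := by ext θ; simp
    rw [this]
    exact measure_singleton s
  have hae1 : ∀ᵐ θ : ℝ, θ ∈ Set.uIoc a s →
      u s * (ind (s - θ) * Ki b N s s + ind (θ - s) * Ki b N s θ) * u θ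
        = u s * Ki b N s s * u θ := by
    filter_upwards [hane] with θ hθ hmem
    rw [Set.uIoc_of_le hs.1] at hmem
    have hlt : θ < s := lt_of_le_of_ne hmem.2 hθ
    have h1 : ind (s - θ) = 1 := by unfold ind; rw [if_pos (by linarith)]
    have h2 : ind (θ - s) = 0 := by unfold ind; rw [if_neg (by intro h; linarith)]
    rw [h1, h2]; ring
  have hae2 : ∀ᵐ θ : ℝ, θ ∈ Set.uIoc s b →
      u s * (ind (s - θ) * Ki b N s s + ind (θ - s) * Ki b N s θ) * u θ
        = u s * Ki b N s θ * u θ := by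
    filter_upwards [hane] with θ hθ hmem
    rw [Set.uIoc_of_le hs.2] at hmem
    have hlt : s < θ := hmem.1
    have h1 : ind (s - θ) = 0 := by unfold ind; rw [if_neg (by intro h; linarith)]
    have h2 : ind (θ - s) = 1 := by unfold ind; rw [if_pos (by linarith)]
    rw [h1, h2]; ring
  have hint1 : IntervalIntegrable
      (fun θ => u s * (ind (s - θ) * Ki b N s s + ind (θ - s) * Ki b N s θ) * u θ)
      volume a s := by
    have hg1 : Continuous fun θ : ℝ => u s * Ki b N s s * u θ := by fun_prop
    refine (hg1.intervalIntegrable a s).congr_ae ?_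
    refine ((MeasureTheory.ae_restrict_of_ae hae1).and
      (MeasureTheory.ae_restrict_mem measurableSet_uIoc)).mono fun θ h => ?_
    exact (h.1 h.2).symm
  have hint2 : IntervalIntegrable
      (fun θ => u s * (ind (s - θ) * Ki b N s s + ind (θ - s) * Ki b N s θ) * u θ)
      volume s b := by
    have hg2 : Continuous fun θ : ℝ => u s * Ki b N s θ * u θ := by fun_prop
    refine (hg2.intervalIntegrable s b).congr_ae ?_
    refine ((MeasureTheory.ae_restrict_of_ae hae2).and
      (MeasureTheory.ae_restrict_mem measurableSet_uIoc)).mono fun θ h => ?_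
    exact (h.1 h.2).symm
  calc (∫ θ in a..b,
        u s * (ind (s - θ) * Ki b N s s + ind (θ - s) * Ki b N s θ) * u θ)
      = (∫ θ in a..s,
          u s * (ind (s - θ) * Ki b N s s + ind (θ - s) * Ki b N s θ) * u θ)
        + ∫ θ in s..b,
          u s * (ind (s - θ) * Ki b N s s + ind (θ - s) * Ki b N s θ) * u θ :=
        (intervalIntegral.integral_add_adjacent_intervals hint1 hint2).symm
    _ = (∫ θ in a..s, u s * Ki b N s s * u θ) + ∫ θ in s..b, u s * Ki b N s θ * u θ := by
        congr 1
        · exact intervalIntegral.integral_congr_ae hae1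
        · exact intervalIntegral.integral_congr_ae hae2
    _ = u s * Bi a u s * Ki b N s s + ∫ ζ in s..b, u s * u ζ * Ki b N s ζ := by
        congr 1
        · rw [show (fun θ => u s * Ki b N s s * u θ) = fun θ => u θ * (u s * Ki b N s s) from
            funext fun θ => by ring, intervalIntegral.integral_mul_const]
          show Bi a u s * (u s * Ki b N s s) = _
          ring
        · exact intervalIntegral.integral_congr fun ζ _ => by ring

theorem stmt10 (a b : ℝ) (hab : a < b) (N : ℝ → ℝ → ℝ) (u : ℝ → ℝ)
    (hN : ContinuousOn (fun p : ℝ × ℝ => N p.1 p.2) (Set.Icc a b ×ˢ Set.Icc a b))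
    (hu : ContinuousOn u (Set.Icc a b)) :
    ∫ s in a..b, ∫ θ in s..b, (∫ η in a..s, (s - η) * u η) * N s θ * (∫ ζ in a..θ, u ζ)
      = ∫ s in a..b, ∫ θ in a..b,
          u s * (ind (s - θ) * (∫ ζ in s..b, ∫ η in s..ζ, (η - s) * N η ζ)
                 + ind (θ - s) * (∫ ζ in θ..b, ∫ η in s..ζ, (η - s) * N η ζ)) * u θ := by
  have hclamp : Continuous fun x : ℝ => max a (min b x) :=
    continuous_const.max (continuous_const.min continuous_id)
  have hmem : ∀ x : ℝ, max a (min b x) ∈ Set.Icc a b :=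
    fun x => ⟨le_max_left _ _, max_le hab.le (min_le_left _ _)⟩
  obtain ⟨v, hv, hvu⟩ : ∃ v : ℝ → ℝ, Continuous v ∧ ∀ x ∈ Set.Icc a b, v x = u x := by
    refine ⟨fun x => u (max a (min b x)), hu.comp_continuous hclamp hmem, fun x hx => ?_⟩
    simp only
    rw [min_eq_right hx.2, max_eq_right hx.1]
  obtain ⟨P, hP, hPN⟩ : ∃ P : ℝ → ℝ → ℝ, (Continuous fun p : ℝ × ℝ => P p.1 p.2)
      ∧ ∀ x ∈ Set.Icc a b, ∀ y ∈ Set.Icc a b, P x y = N x y := by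
    refine ⟨fun x y => N (max a (min b x)) (max a (min b y)), ?_, fun x hx y hy => ?_⟩
    · exact hN.comp_continuous
        ((hclamp.comp continuous_fst).prodMk (hclamp.comp continuous_snd))
        (fun p => ⟨hmem _, hmem _⟩)
    · simp only
      rw [min_eq_right hx.2, max_eq_right hx.1, min_eq_right hy.2, max_eq_right hy.1]
  have key := core a b hab.le P v hP hv
  have hL : (∫ s in a..b, ∫ θ in s..b,
        (∫ η in a..s, (s - η) * u η) * N s θ * (∫ ζ in a..θ, u ζ))
      = ∫ s in a..b, ∫ θ in s..b,
        (∫ η in a..s, (s - η) * v η) * P s θ * (∫ ζ in a..θ, v ζ) := by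
    refine intervalIntegral.integral_congr fun s hs => ?_
    rw [Set.uIcc_of_le hab.le] at hs
    refine intervalIntegral.integral_congr fun θ hθ => ?_
    rw [Set.uIcc_of_le hs.2] at hθ
    have hθab : θ ∈ Set.Icc a b := ⟨hs.1.trans hθ.1, hθ.2⟩
    have e1 : (∫ η in a..s, (s - η) * u η) = ∫ η in a..s, (s - η) * v η := by
      refine intervalIntegral.integral_congr fun η hη => ?_
      rw [Set.uIcc_of_le hs.1] at hη
      rw [hvu η ⟨hη.1, hη.2.trans hs.2⟩]
    have e2 : (∫ ζ in a..θ, u ζ) = ∫ ζ in a..θ, v ζ := by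
      refine intervalIntegral.integral_congr fun ζ hζ => ?_
      rw [Set.uIcc_of_le hθab.1] at hζ
      rw [hvu ζ ⟨hζ.1, hζ.2.trans hθab.2⟩]
    rw [e1, e2, hPN s hs θ hθab]
  have hR : (∫ s in a..b, ∫ θ in a..b,
        u s * (ind (s - θ) * (∫ ζ in s..b, ∫ η in s..ζ, (η - s) * N η ζ)
               + ind (θ - s) * (∫ ζ in θ..b, ∫ η in s..ζ, (η - s) * N η ζ)) * u θ)
      = ∫ s in a..b, ∫ θ in a..b,
        v s * (ind (s - θ) * (∫ ζ in s..b, ∫ η in s..ζ, (η - s) * P η ζ)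
               + ind (θ - s) * (∫ ζ in θ..b, ∫ η in s..ζ, (η - s) * P η ζ)) * v θ := by
    refine intervalIntegral.integral_congr fun s hs => ?_
    rw [Set.uIcc_of_le hab.le] at hs
    refine intervalIntegral.integral_congr fun θ hθ => ?_
    rw [Set.uIcc_of_le hab.le] at hθ
    have e1 : (∫ ζ in s..b, ∫ η in s..ζ, (η - s) * N η ζ)
        = ∫ ζ in s..b, ∫ η in s..ζ, (η - s) * P η ζ := by
      refine intervalIntegral.integral_congr fun ζ hζ => ?_
      rw [Set.uIcc_of_le hs.2] at hζ
      have hζab : ζ ∈ Set.Icc a b := ⟨hs.1.trans hζ.1, hζ.2⟩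
      refine intervalIntegral.integral_congr fun η hη => ?_
      have hηa : a ≤ η := (le_min hs.1 hζab.1).trans hη.1
      have hηb : η ≤ b := hη.2.trans (max_le hs.2 hζab.2)
      rw [hPN η ⟨hηa, hηb⟩ ζ hζab]
    have e2 : (∫ ζ in θ..b, ∫ η in s..ζ, (η - s) * N η ζ)
        = ∫ ζ in θ..b, ∫ η in s..ζ, (η - s) * P η ζ := by
      refine intervalIntegral.integral_congr fun ζ hζ => ?_
      rw [Set.uIcc_of_le hθ.2] at hζ
      have hζab : ζ ∈ Set.Icc a b := ⟨hθ.1.trans hζ.1, hζ.2⟩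
      refine intervalIntegral.integral_congr fun η hη => ?_
      have hηa : a ≤ η := (le_min hs.1 hζab.1).trans hη.1
      have hηb : η ≤ b := hη.2.trans (max_le hs.2 hζab.2)
      rw [hPN η ⟨hηa, hηb⟩ ζ hζab]
    rw [e1, e2, hvu s hs, hvu θ hθ]
  rw [hL, hR]
  exact key
end

section
/- Let a < b, N : [a,b]×[a,b] → ℝ continuous, u : [a,b] → ℝ continuous. Then ∫ₐᵇ ∫ₐ^s (∫ₐ^s (s-η)·u(η) dη) · N(s,θ) · (∫ₐ^θ (θ-ζ)·u(ζ) dζ) dθ ds = ∫ₐᵇ ∫ₐᵇ u(s) · K(s,θ) · u(θ) dθ ds, where K(s,θ) = I(s-θ)·∫_s^b ∫_θ^η (η-s)(ζ-θ)·N(η,ζ) dζ dη + I(θ-s)·∫_θ^b ∫_θ^η (η-s)(ζ-θ)·N(η,ζ) dζ dη. -/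
open MeasureTheory Set intervalIntegral

/-- Swap the order of integration over the region `{(s,t) : c ≤ s ≤ b, a ≤ t ≤ s}`. -/
lemma swap_tri (a c b : ℝ) (hac : a ≤ c) (hcb : c ≤ b) (f : ℝ → ℝ → ℝ)
    (hf : Continuous fun p : ℝ × ℝ => f p.1 p.2) :
    ∫ s in c..b, ∫ t in a..s, f s t = ∫ t in a..b, ∫ s in max c t..b, f s t := by
  have hab : a ≤ b := hac.trans hcb
  set μ := volume.restrict (Ioc c b) with hμ
  set ν := volume.restrict (Ioc a b) with hν
  have hInt : Integrable (Function.uncurry fun s t => if t ≤ s then f s t else 0) (μ.prod ν) := by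
    rw [hμ, hν, Measure.prod_restrict]
    have h1 : IntegrableOn (fun p : ℝ × ℝ => f p.1 p.2) (Icc a b ×ˢ Icc a b)
        (volume.prod volume) := by
      rw [← Measure.volume_eq_prod]
      exact hf.continuousOn.integrableOn_compact (isCompact_Icc.prod isCompact_Icc)
    have h2 : IntegrableOn (fun p : ℝ × ℝ => f p.1 p.2) (Ioc c b ×ˢ Ioc a b)
        (volume.prod volume) :=
      h1.mono_set (prod_mono ((Ioc_subset_Ioc_left hac).trans Ioc_subset_Icc_self)
        Ioc_subset_Icc_self)
    have h3 := h2.integrable.indicator (μ := (volume.prod volume).restrict (Ioc c b ×ˢ Ioc a b))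
      (s := {p : ℝ × ℝ | p.2 ≤ p.1}) (isClosed_le continuous_snd continuous_fst).measurableSet
    have heq : (Function.uncurry fun s t => if t ≤ s then f s t else 0)
        = {p : ℝ × ℝ | p.2 ≤ p.1}.indicator fun p => f p.1 p.2 := by
      ext p
      simp [Set.indicator_apply]
      rfl
    rw [heq]
    exact h3
  have key := integral_integral_swap hInt
  have hL : (∫ s in c..b, ∫ t in a..s, f s t)
      = ∫ s, ∫ t, (if t ≤ s then f s t else 0) ∂ν ∂μ := by
    rw [intervalIntegral.integral_of_le hcb]
    refine setIntegral_congr_fun measurableSet_Ioc (fun s hs => ?_)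
    have has : a ≤ s := hac.trans hs.1.le
    rw [intervalIntegral.integral_of_le has]
    have h4 : Ioc a s = Ioc a b ∩ Iic s := by
      rw [Ioc_inter_Iic, min_eq_right hs.2]
    rw [h4, ← setIntegral_indicator measurableSet_Iic]
    refine setIntegral_congr_fun measurableSet_Ioc (fun t _ => ?_)
    simp [Set.indicator_apply, Set.mem_Iic]
  have hR : (∫ t, ∫ s, (if t ≤ s then f s t else 0) ∂μ ∂ν)
      = ∫ t in a..b, ∫ s in max c t..b, f s t := by
    rw [intervalIntegral.integral_of_le hab]
    refine setIntegral_congr_fun measurableSet_Ioc (fun t ht => ?_)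
    have h5 : (∫ s, (if t ≤ s then f s t else 0) ∂μ)
        = ∫ s in Ioc c b ∩ Ici t, f s t := by
      rw [← setIntegral_indicator measurableSet_Ici]
      refine setIntegral_congr_fun measurableSet_Ioc (fun s _ => ?_)
      simp [Set.indicator_apply, Set.mem_Ici]
    rw [h5]
    have h6 : (Ioc c b ∩ Ici t : Set ℝ) =ᵐ[volume] (Ioc (max c t) b : Set ℝ) := by
      rcases le_or_gt t c with h | h
      · have h7 : Ioc c b ∩ Ici t = Ioc c b :=
          Set.inter_eq_left.mpr (fun s hs => h.trans hs.1.le)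
        rw [max_eq_left h, h7]
        exact Filter.EventuallyEq.rfl
      · rw [max_eq_right h.le]
        have : Ioc c b ∩ Ici t = Icc t b := by
          ext s
          simp only [Set.mem_inter_iff, Set.mem_Ioc, Set.mem_Ici, Set.mem_Icc]
          constructor
          · rintro ⟨⟨_, h2⟩, h3⟩; exact ⟨h3, h2⟩
          · rintro ⟨h1, h2⟩; exact ⟨⟨h.trans_le h1, h2⟩, h1⟩
        rw [this]
        exact (Ioc_ae_eq_Icc).symm
    rw [setIntegral_congr_set h6, ← intervalIntegral.integral_of_le (max_le hcb ht.2)]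
  rw [hL, key, hR]

/-- main identity for globally continuous data -/
lemma main_cont (a b : ℝ) (hab : a ≤ b) (N : ℝ → ℝ → ℝ) (u : ℝ → ℝ)
    (hN : Continuous fun p : ℝ × ℝ => N p.1 p.2) (hu : Continuous u) :
    (∫ s in a..b, ∫ θ in a..s,
        (∫ η in a..s, (s - η) * u η) * N s θ * (∫ ζ in a..θ, (θ - ζ) * u ζ))
      = ∫ s in a..b, u s * ∫ θ in a..b, u θ *
          ∫ η in max s θ..b, ∫ ζ in θ..η, (η - s) * ((ζ - θ) * N η ζ) := by
  have hB : Continuous fun θ => ∫ ζ in a..θ, (θ - ζ) * u ζ :=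
    intervalIntegral.continuous_parametric_intervalIntegral_of_continuous
      (f := fun θ ζ => (θ - ζ) * u ζ) (by fun_prop) continuous_id
  set B : ℝ → ℝ := fun θ => ∫ ζ in a..θ, (θ - ζ) * u ζ with hBdef
  have hC : Continuous fun s => ∫ θ in a..s, N s θ * B θ :=
    intervalIntegral.continuous_parametric_intervalIntegral_of_continuous
      (f := fun s θ => N s θ * B θ) (by fun_prop) continuous_id
  set C : ℝ → ℝ := fun s => ∫ θ in a..s, N s θ * B θ with hCdef
  have hD : Continuous fun p : ℝ × ℝ => ∫ θ in p.2..p.1, (θ - p.2) * N p.1 θ := by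
    have h1 : Continuous fun p : ℝ × ℝ => ∫ θ in a..p.1, (θ - p.2) * N p.1 θ :=
      intervalIntegral.continuous_parametric_intervalIntegral_of_continuous
        (f := fun (p : ℝ × ℝ) θ => (θ - p.2) * N p.1 θ) (by fun_prop) continuous_fst
    have h2 : Continuous fun p : ℝ × ℝ => ∫ θ in a..p.2, (θ - p.2) * N p.1 θ :=
      intervalIntegral.continuous_parametric_intervalIntegral_of_continuous
        (f := fun (p : ℝ × ℝ) θ => (θ - p.2) * N p.1 θ) (by fun_prop) continuous_snd
    have e : ∀ p : ℝ × ℝ, (∫ θ in p.2..p.1, (θ - p.2) * N p.1 θ)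
        = (∫ θ in a..p.1, (θ - p.2) * N p.1 θ) - ∫ θ in a..p.2, (θ - p.2) * N p.1 θ := by
      intro p
      rw [intervalIntegral.integral_interval_sub_left] <;>
        exact Continuous.intervalIntegrable (by fun_prop) _ _
    exact (h1.sub h2).congr fun p => (e p).symm
  calc
    (∫ s in a..b, ∫ θ in a..s,
        (∫ η in a..s, (s - η) * u η) * N s θ * (∫ ζ in a..θ, (θ - ζ) * u ζ))
      = ∫ s in a..b, ∫ η in a..s, (s - η) * u η * C s := by
        refine intervalIntegral.integral_congr fun s _ => ?_
        have e1 : (∫ θ in a..s, (∫ η in a..s, (s - η) * u η) * N s θ * B θ)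
            = (∫ η in a..s, (s - η) * u η) * C s := by
          rw [hCdef]
          rw [← intervalIntegral.integral_const_mul]
          exact intervalIntegral.integral_congr fun θ _ => by ring
        rw [e1, ← intervalIntegral.integral_mul_const]
    _ = ∫ η in a..b, ∫ s in max a η..b, (s - η) * u η * C s := by
        refine swap_tri a a b le_rfl hab _ ?_
        fun_prop
    _ = ∫ η in a..b, u η * ∫ s in η..b, (s - η) * C s := by
        refine intervalIntegral.integral_congr fun η hη => ?_
        rw [Set.uIcc_of_le hab] at hη
        rw [max_eq_right hη.1, ← intervalIntegral.integral_const_mul]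
        exact intervalIntegral.integral_congr fun s _ => by ring
    _ = ∫ η in a..b, u η * ∫ ζ in a..b, u ζ *
          ∫ s in max η ζ..b, ∫ θ in ζ..s, (s - η) * ((θ - ζ) * N s θ) := by
        refine intervalIntegral.integral_congr fun η hη => ?_
        rw [Set.uIcc_of_le hab] at hη
        congr 1
        have hCs : ∀ s ∈ Set.uIcc η b, C s = ∫ ζ in a..s, u ζ * ∫ θ in ζ..s, (θ - ζ) * N s θ := by
          intro s hs
          rw [Set.uIcc_of_le hη.2] at hs
          have has : a ≤ s := hη.1.trans hs.1
          show (∫ θ in a..s, N s θ * B θ) = _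
          have e2 : (∫ θ in a..s, N s θ * B θ)
              = ∫ θ in a..s, ∫ ζ in a..θ, N s θ * ((θ - ζ) * u ζ) := by
            refine intervalIntegral.integral_congr fun θ _ => ?_
            rw [intervalIntegral.integral_const_mul]
          rw [e2, swap_tri a a s le_rfl has _ (by fun_prop)]
          refine intervalIntegral.integral_congr fun ζ hζ => ?_
          rw [Set.uIcc_of_le has] at hζ
          rw [max_eq_right hζ.1, ← intervalIntegral.integral_const_mul]
          exact intervalIntegral.integral_congr fun θ _ => by ring
        have e3 : (∫ s in η..b, (s - η) * C s)
            = ∫ s in η..b, ∫ ζ in a..s, (s - η) * (u ζ * ∫ θ in ζ..s, (θ - ζ) * N s θ) := by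
          refine intervalIntegral.integral_congr fun s hs => ?_
          rw [hCs s hs, ← intervalIntegral.integral_const_mul]
        rw [e3, swap_tri a η b hη.1 hη.2 _ (by fun_prop)]
        refine intervalIntegral.integral_congr fun ζ hζ => ?_
        rw [Set.uIcc_of_le hab] at hζ
        rw [← intervalIntegral.integral_const_mul]
        refine intervalIntegral.integral_congr fun s hs => ?_
        rw [intervalIntegral.integral_const_mul]
        ring

lemma rhs_form (a b : ℝ) (N : ℝ → ℝ → ℝ) (u : ℝ → ℝ) :
    (∫ s in a..b, ∫ θ in a..b,
        u s * (ind (s - θ) * (∫ η in s..b, ∫ ζ in θ..η, (η - s) * (ζ - θ) * N η ζ)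
               + ind (θ - s) * (∫ η in θ..b, ∫ ζ in θ..η, (η - s) * (ζ - θ) * N η ζ)) * u θ)
      = ∫ s in a..b, u s * ∫ θ in a..b, u θ *
          ∫ η in max s θ..b, ∫ ζ in θ..η, (η - s) * ((ζ - θ) * N η ζ) := by
  refine intervalIntegral.integral_congr fun s _ => ?_
  rw [← intervalIntegral.integral_const_mul]
  refine intervalIntegral.integral_congr_ae ?_
  have hae : ∀ᵐ θ : ℝ, θ ≠ s := by
    rw [ae_iff]
    simp only [ne_eq, not_not, Set.setOf_eq_eq_singleton]
    exact measure_singleton s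
  filter_upwards [hae] with θ hθ _
  have hX : ∀ c : ℝ, (∫ η in c..b, ∫ ζ in θ..η, (η - s) * (ζ - θ) * N η ζ)
      = ∫ η in c..b, ∫ ζ in θ..η, (η - s) * ((ζ - θ) * N η ζ) := fun c =>
    intervalIntegral.integral_congr fun η _ =>
      intervalIntegral.integral_congr fun ζ _ => by ring
  rcases lt_or_gt_of_ne hθ with h | h
  · rw [max_eq_left h.le]
    simp only [ind, if_pos (by linarith : (0:ℝ) ≤ s - θ),
      if_neg (by linarith : ¬ (0:ℝ) ≤ θ - s), hX]
    ring
  · rw [max_eq_right h.le]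
    simp only [ind, if_pos (by linarith : (0:ℝ) ≤ θ - s),
      if_neg (by linarith : ¬ (0:ℝ) ≤ s - θ), hX]
    ring

theorem stmt16 (a b : ℝ) (hab : a < b) (N : ℝ → ℝ → ℝ) (u : ℝ → ℝ)
    (hN : ContinuousOn (fun p : ℝ × ℝ => N p.1 p.2) (Set.Icc a b ×ˢ Set.Icc a b))
    (hu : ContinuousOn u (Set.Icc a b)) :
    ∫ s in a..b, ∫ θ in a..s,
        (∫ η in a..s, (s - η) * u η) * N s θ * (∫ ζ in a..θ, (θ - ζ) * u ζ)
      = ∫ s in a..b, ∫ θ in a..b,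
          u s * (ind (s - θ) * (∫ η in s..b, ∫ ζ in θ..η, (η - s) * (ζ - θ) * N η ζ)
                 + ind (θ - s) * (∫ η in θ..b, ∫ ζ in θ..η, (η - s) * (ζ - θ) * N η ζ)) * u θ := by
  have hab' : a ≤ b := hab.le
  -- extend u and N to globally continuous functions
  obtain ⟨u'c, hu'c⟩ := ContinuousMap.exists_restrict_eq (Y := ℝ) isClosed_Icc
    ⟨(Icc a b).restrict u, hu.restrict⟩
  set u' : ℝ → ℝ := fun x => u'c x with hu'def
  have hu' : Continuous u' := u'c.continuous
  have hue : ∀ x ∈ Icc a b, u' x = u x := by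
    intro x hx
    have := congrFun (congrArg ContinuousMap.toFun hu'c) ⟨x, hx⟩
    exact this
  obtain ⟨N'c, hN'c⟩ := ContinuousMap.exists_restrict_eq (Y := ℝ)
    (isClosed_Icc.prod isClosed_Icc)
    ⟨(Icc a b ×ˢ Icc a b).restrict (fun p : ℝ × ℝ => N p.1 p.2), hN.restrict⟩
  set N' : ℝ → ℝ → ℝ := fun x y => N'c (x, y) with hN'def
  have hN' : Continuous fun p : ℝ × ℝ => N' p.1 p.2 := by
    simpa [hN'def] using N'c.continuous
  have hNe : ∀ x ∈ Icc a b, ∀ y ∈ Icc a b, N' x y = N x y := by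
    intro x hx y hy
    have := congrFun (congrArg ContinuousMap.toFun hN'c)
      ⟨(x, y), Set.mk_mem_prod hx hy⟩
    exact this
  -- replace N, u by the extensions on the left-hand side
  have hL : (∫ s in a..b, ∫ θ in a..s,
        (∫ η in a..s, (s - η) * u η) * N s θ * (∫ ζ in a..θ, (θ - ζ) * u ζ))
      = ∫ s in a..b, ∫ θ in a..s,
        (∫ η in a..s, (s - η) * u' η) * N' s θ * (∫ ζ in a..θ, (θ - ζ) * u' ζ) := by
    refine intervalIntegral.integral_congr fun s hs => ?_
    rw [Set.uIcc_of_le hab'] at hs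
    refine intervalIntegral.integral_congr fun θ hθ => ?_
    rw [Set.uIcc_of_le hs.1] at hθ
    have hθb : θ ∈ Icc a b := ⟨hθ.1, hθ.2.trans hs.2⟩
    have e1 : (∫ η in a..s, (s - η) * u η) = ∫ η in a..s, (s - η) * u' η := by
      refine intervalIntegral.integral_congr fun η hη => ?_
      rw [Set.uIcc_of_le hs.1] at hη
      rw [hue η ⟨hη.1, hη.2.trans hs.2⟩]
    have e2 : (∫ ζ in a..θ, (θ - ζ) * u ζ) = ∫ ζ in a..θ, (θ - ζ) * u' ζ := by
      refine intervalIntegral.integral_congr fun ζ hζ => ?_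
      rw [Set.uIcc_of_le hθb.1] at hζ
      rw [hue ζ ⟨hζ.1, hζ.2.trans hθb.2⟩]
    rw [e1, e2, ← hNe s hs θ hθb]
  -- replace N, u by the extensions on the right-hand side
  have hmemu : ∀ {θ η : ℝ}, θ ∈ Icc a b → η ∈ Icc a b → uIcc θ η ⊆ Icc a b := by
    intro θ η hθ hη
    rw [← Set.uIcc_of_le hab']
    exact Set.uIcc_subset_uIcc (by rw [Set.uIcc_of_le hab']; exact hθ)
      (by rw [Set.uIcc_of_le hab']; exact hη)
  have hR : (∫ s in a..b, ∫ θ in a..b,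
          u s * (ind (s - θ) * (∫ η in s..b, ∫ ζ in θ..η, (η - s) * (ζ - θ) * N η ζ)
                 + ind (θ - s) * (∫ η in θ..b, ∫ ζ in θ..η, (η - s) * (ζ - θ) * N η ζ)) * u θ)
      = ∫ s in a..b, ∫ θ in a..b,
          u' s * (ind (s - θ) * (∫ η in s..b, ∫ ζ in θ..η, (η - s) * (ζ - θ) * N' η ζ)
                 + ind (θ - s) * (∫ η in θ..b, ∫ ζ in θ..η, (η - s) * (ζ - θ) * N' η ζ)) * u' θ := by
    refine intervalIntegral.integral_congr fun s hs => ?_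
    rw [Set.uIcc_of_le hab'] at hs
    refine intervalIntegral.integral_congr fun θ hθ => ?_
    rw [Set.uIcc_of_le hab'] at hθ
    have k1 : (∫ η in s..b, ∫ ζ in θ..η, (η - s) * (ζ - θ) * N η ζ)
        = ∫ η in s..b, ∫ ζ in θ..η, (η - s) * (ζ - θ) * N' η ζ := by
      refine intervalIntegral.integral_congr fun η hη => ?_
      rw [Set.uIcc_of_le hs.2] at hη
      have hηb : η ∈ Icc a b := ⟨hs.1.trans hη.1, hη.2⟩
      refine intervalIntegral.integral_congr fun ζ hζ => ?_
      rw [hNe η hηb ζ (hmemu hθ hηb hζ)]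
    have k2 : (∫ η in θ..b, ∫ ζ in θ..η, (η - s) * (ζ - θ) * N η ζ)
        = ∫ η in θ..b, ∫ ζ in θ..η, (η - s) * (ζ - θ) * N' η ζ := by
      refine intervalIntegral.integral_congr fun η hη => ?_
      rw [Set.uIcc_of_le hθ.2] at hη
      have hηb : η ∈ Icc a b := ⟨hθ.1.trans hη.1, hη.2⟩
      refine intervalIntegral.integral_congr fun ζ hζ => ?_
      rw [hNe η hηb ζ (hmemu hθ hηb hζ)]
    rw [← hue s hs, ← hue θ hθ, k1, k2]
  rw [hL, hR, main_cont a b hab' N' u' hN' hu', rhs_form a b N' u']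
end
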